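/- Let (X, T) be a topological dynamical system, d ∈ ℕ, and p₁, …, p_d : ℤ → ℤ functions such that for all non-empty open sets U₁, …, U_d, V₁, …, V_d ⊆ X the set ⋂_{i=1}^d {n ∈ ℤ : U_i ∩ T^{−p_i(n)}V_i ≠ ∅} is thickly syndetic. Let C ⊆ ℤ be syndetic and r : ℕ → ℕ any function. Then for any non-empty open sets V₁, …, V_d ⊆ X there exist integers k₀, k₁, k₂, … ∈ C with |k₀| > r(0) and |k_n| > |k_{n−1}| + r(|k_{n−1}|) for all n ≥ 1, and for each i a descending sequence V_i ⊇ V_i^{(0)} ⊇ V_i^{(1)} ⊇ ⋯ of non-empty open sets such that T^{p_i(k_j)} T^{−j} V_i^{(n)} ⊆ V_i for all 0 ≤ j ≤ n and all i. -/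

import Mathlib

def Syndetic (S : Set ℤ) : Prop :=
  ∃ L : ℕ, ∀ n : ℤ, ∃ m ∈ S, n ≤ m ∧ m ≤ n + L

def ThicklySyndetic (S : Set ℤ) : Prop :=
  ∀ L : ℕ, ∃ B : Set ℤ, Syndetic B ∧ ∀ b ∈ B, ∀ j : ℤ, 0 ≤ j → j ≤ (L : ℤ) → b + j ∈ S

def Thick (S : Set ℤ) : Prop :=
  ∀ L : ℕ, ∃ a : ℤ, ∀ j : ℤ, 0 ≤ j → j ≤ (L : ℤ) → a + j ∈ S

noncomputable def nint (a : ℝ) : ℤ := ⌊a + 1/2⌋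

noncomputable def sfrac (a : ℝ) : ℝ := a - nint a

theorem descending_open_sets {X : Type*} [MetricSpace X] [CompactSpace X]
    (T : X ≃ₜ X) (d : ℕ) (p : Fin d → ℤ → ℤ)
    (hts : ∀ U V : Fin d → Set X, (∀ i, IsOpen (U i)) → (∀ i, (U i).Nonempty) →
      (∀ i, IsOpen (V i)) → (∀ i, (V i).Nonempty) →
      ThicklySyndetic {n : ℤ | ∀ i, (U i ∩ (fun x => (T.toEquiv ^ (p i n)) x) ⁻¹' V i).Nonempty})
    (C : Set ℤ) (hC : Syndetic C) (r : ℕ → ℕ)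
    (V : Fin d → Set X) (hVo : ∀ i, IsOpen (V i)) (hVne : ∀ i, (V i).Nonempty) :
    ∃ k : ℕ → ℤ, (∀ n, k n ∈ C) ∧ (k 0).natAbs > r 0 ∧
      (∀ n : ℕ, 1 ≤ n → (k n).natAbs > (k (n - 1)).natAbs + r ((k (n - 1)).natAbs)) ∧
      ∃ W : Fin d → ℕ → Set X,
        (∀ i n, IsOpen (W i n) ∧ (W i n).Nonempty ∧ W i n ⊆ V i) ∧
        (∀ i n, W i (n + 1) ⊆ W i n) ∧
        (∀ i : Fin d, ∀ n j : ℕ, j ≤ n →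
          (fun x => (T.toEquiv ^ (p i (k j) - (j : ℤ))) x) '' (W i n) ⊆ V i) := by
  classical
  -- continuity of integer powers of T
  have hcont : ∀ m : ℤ, Continuous fun x : X => (T.toEquiv ^ m) x := by
    intro m
    induction m using Int.induction_on with
    | zero => simpa using continuous_id'
    | succ n ih =>
        have e : ∀ x : X, (T.toEquiv ^ ((n : ℤ) + 1)) x = (T.toEquiv ^ (n : ℤ)) (T x) := by
          intro x
          rw [zpow_add, zpow_one, Equiv.Perm.mul_apply]
          rfl
        simp only [e]
        exact ih.comp T.continuous
    | pred n ih =>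
        have e : ∀ x : X, (T.toEquiv ^ (-(n : ℤ) - 1)) x = (T.toEquiv ^ (-(n : ℤ))) (T.symm x) := by
          intro x
          rw [sub_eq_add_neg, zpow_add, Equiv.Perm.mul_apply]
          congr 1
        simp only [e]
        exact ih.comp T.continuous_symm
  -- thickly syndetic meets syndetic in arbitrarily large elements
  have key : ∀ S : Set ℤ, ThicklySyndetic S → ∀ N : ℤ, ∃ k, k ∈ S ∧ k ∈ C ∧ N ≤ k := by
    intro S hS N
    obtain ⟨L, hL⟩ := hC
    obtain ⟨B, hB, hBS⟩ := hS L
    obtain ⟨L', hL'⟩ := hB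
    obtain ⟨b, hbB, hb1, _⟩ := hL' N
    obtain ⟨m, hmC, hm1, hm2⟩ := hL b
    refine ⟨m, ?_, hmC, le_trans hb1 hm1⟩
    have h := hBS b hbB (m - b) (by omega) (by omega)
    have e : b + (m - b) = m := by ring
    rwa [e] at h
  -- one step of the construction
  have step : ∀ (n : ℤ) (W : Fin d → Set X),
      (∀ i, IsOpen (W i) ∧ (W i).Nonempty ∧ W i ⊆ V i) → ∀ N : ℤ,
      ∃ s : ℤ × (Fin d → Set X),
        s.1 ∈ C ∧ N ≤ s.1 ∧
        (∀ i, IsOpen (s.2 i) ∧ (s.2 i).Nonempty ∧ s.2 i ⊆ W i) ∧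
        (∀ i, (fun x => (T.toEquiv ^ (p i s.1 - n)) x) '' s.2 i ⊆ V i) := by
    intro n W hW N
    set U : Fin d → Set X := fun i => (fun x => (T.toEquiv ^ n) x) ⁻¹' (W i) with hU
    have hUo : ∀ i, IsOpen (U i) := fun i => (hW i).1.preimage (hcont n)
    have hUne : ∀ i, (U i).Nonempty := by
      intro i
      obtain ⟨x, hx⟩ := (hW i).2.1
      exact ⟨(T.toEquiv ^ n).symm x, by simpa [hU] using hx⟩
    obtain ⟨k, hkS, hkC, hkN⟩ := key _ (hts U V hUo hUne hVo hVne) N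
    have hkS' : ∀ i, (U i ∩ (fun x => (T.toEquiv ^ (p i k)) x) ⁻¹' V i).Nonempty := hkS
    refine ⟨⟨k, fun i => W i ∩ (fun x => (T.toEquiv ^ (p i k - n)) x) ⁻¹' (V i)⟩,
      hkC, hkN, ?_, ?_⟩
    · intro i
      refine ⟨(hW i).1.inter ((hVo i).preimage (hcont _)), ?_, Set.inter_subset_left⟩
      obtain ⟨y, hy1, hy2⟩ := hkS' i
      refine ⟨(T.toEquiv ^ n) y, hy1, ?_⟩
      have e : (T.toEquiv ^ (p i k - n)) ((T.toEquiv ^ n) y) = (T.toEquiv ^ (p i k)) y := by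
        have e2 : p i k - n + n = p i k := by ring
        rw [← Equiv.Perm.mul_apply, ← zpow_add, e2]
      show (T.toEquiv ^ (p i k - n)) ((T.toEquiv ^ n) y) ∈ V i
      rw [e]
      exact hy2
    · rintro i x ⟨y, hy, rfl⟩
      exact hy.2
  -- recursive construction
  set P : ℤ × (Fin d → Set X) → Prop := fun s =>
    s.1 ∈ C ∧ ∀ i, IsOpen (s.2 i) ∧ (s.2 i).Nonempty ∧ s.2 i ⊆ V i with hP
  have hV0 : ∀ i, IsOpen (V i) ∧ (V i).Nonempty ∧ V i ⊆ V i :=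
    fun i => ⟨hVo i, hVne i, subset_rfl⟩
  let base : Subtype P := ⟨(step ((0 : ℕ) : ℤ) V hV0 ((r 0 : ℤ) + 1)).choose, by
    obtain ⟨h1, _, h3, _⟩ := (step ((0 : ℕ) : ℤ) V hV0 ((r 0 : ℤ) + 1)).choose_spec
    exact ⟨h1, fun i => ⟨(h3 i).1, (h3 i).2.1, (h3 i).2.2⟩⟩⟩
  let nxt : ℕ → Subtype P → Subtype P := fun n s =>
    ⟨(step (((n + 1 : ℕ)) : ℤ) s.1.2 s.2.2
        ((s.1.1.natAbs : ℤ) + (r s.1.1.natAbs : ℤ) + 1)).choose, by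
      obtain ⟨h1, _, h3, _⟩ := (step (((n + 1 : ℕ)) : ℤ) s.1.2 s.2.2
        ((s.1.1.natAbs : ℤ) + (r s.1.1.natAbs : ℤ) + 1)).choose_spec
      exact ⟨h1, fun i => ⟨(h3 i).1, (h3 i).2.1, (h3 i).2.2.trans (s.2.2 i).2.2⟩⟩⟩
  let f : ℕ → Subtype P := fun n => Nat.rec (motive := fun _ => Subtype P) base nxt n
  have hbase_spec := (step ((0 : ℕ) : ℤ) V hV0 ((r 0 : ℤ) + 1)).choose_spec
  have hstep_spec : ∀ n : ℕ,
      (f (n + 1)).1.1 ∈ C ∧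
      ((f n).1.1.natAbs : ℤ) + (r (f n).1.1.natAbs : ℤ) + 1 ≤ (f (n + 1)).1.1 ∧
      (∀ i, IsOpen ((f (n + 1)).1.2 i) ∧ ((f (n + 1)).1.2 i).Nonempty ∧
        (f (n + 1)).1.2 i ⊆ (f n).1.2 i) ∧
      (∀ i, (fun x => (T.toEquiv ^ (p i (f (n + 1)).1.1 - ((n + 1 : ℕ) : ℤ))) x) ''
        (f (n + 1)).1.2 i ⊆ V i) := by
    intro n
    exact (step (((n + 1 : ℕ)) : ℤ) (f n).1.2 (f n).2.2
      (((f n).1.1.natAbs : ℤ) + (r (f n).1.1.natAbs : ℤ) + 1)).choose_spec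
  have hmono : ∀ (i : Fin d) (j n : ℕ), j ≤ n → (f n).1.2 i ⊆ (f j).1.2 i := by
    intro i j n hjn
    induction n with
    | zero =>
        have : j = 0 := Nat.le_zero.mp hjn
        subst this; exact subset_rfl
    | succ m ih =>
        rcases Nat.lt_or_ge j (m + 1) with h | h
        · exact (((hstep_spec m).2.2.1 i).2.2).trans (ih (Nat.lt_succ_iff.mp h))
        · have : j = m + 1 := le_antisymm hjn h
          subst this; exact subset_rfl
  have himg : ∀ (i : Fin d) (n : ℕ),
      (fun x => (T.toEquiv ^ (p i (f n).1.1 - (n : ℤ))) x) '' (f n).1.2 i ⊆ V i := by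
    intro i n
    cases n with
    | zero =>
        have h : ∀ i, (fun x => (T.toEquiv ^ (p i (f 0).1.1 - ((0 : ℕ) : ℤ))) x) ''
            (f 0).1.2 i ⊆ V i := hbase_spec.2.2.2
        exact h i
    | succ m => exact (hstep_spec m).2.2.2 i
  refine ⟨fun n => (f n).1.1, fun n => (f n).2.1, ?_, ?_,
    fun i n => (f n).1.2 i, fun i n => (f n).2.2 i,
    fun i n => ((hstep_spec n).2.2.1 i).2.2, ?_⟩
  · have h : (r 0 : ℤ) + 1 ≤ (f 0).1.1 := hbase_spec.2.1
    show ((f 0).1.1).natAbs > r 0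
    omega
  · intro n hn
    obtain ⟨m, rfl⟩ : ∃ m, n = m + 1 := ⟨n - 1, by omega⟩
    have h := (hstep_spec m).2.1
    show ((f (m + 1)).1.1).natAbs > ((f (m + 1 - 1)).1.1).natAbs + r (((f (m + 1 - 1)).1.1).natAbs)
    have e : m + 1 - 1 = m := rfl
    rw [e]
    omega
  · intro i n j hj
    exact (Set.image_mono (hmono i j n hj)).trans (himg i j)
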